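/- arXiv:0907.2849 — 2 statements merged into one kernel-verified Lean document; each statement's English description precedes it below -/
import Mathlib

section
/- For any element s of the set of simple generators S of a Coxeter group W, left multiplication by s gives an isomorphism of posets from {w ∈ W : w ≱ s} (with the right weak order) to {w ∈ W : w ≥ s} (with the right weak order). -/
/-- The right weak order: `u ≤ w` iff `ℓ(u) + ℓ(u⁻¹w) = ℓ(w)`. -/
def WeakLE {B W : Type*} [Group W] {M : CoxeterMatrix B} (cs : CoxeterSystem M W)
    (u w : W) : Prop :=
  cs.length u + cs.length (u⁻¹ * w) = cs.length w

/-- Left multiplication by a simple generator `s` is an isomorphism of posets from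
`{w : w ≱ s}` to `{w : w ≥ s}` in the right weak order: it maps the first set into the
second, its inverse (itself) maps the second into the first, and it preserves and
reflects the weak order. -/
theorem simple_mul_weak_order_iso {B W : Type*} [Group W] {M : CoxeterMatrix B}
    (cs : CoxeterSystem M W) (i : B) :
    (∀ w : W, ¬ WeakLE cs (cs.simple i) w → WeakLE cs (cs.simple i) (cs.simple i * w)) ∧
    (∀ w : W, WeakLE cs (cs.simple i) w → ¬ WeakLE cs (cs.simple i) (cs.simple i * w)) ∧
    (∀ u v : W, ¬ WeakLE cs (cs.simple i) u → ¬ WeakLE cs (cs.simple i) v →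
      (WeakLE cs u v ↔ WeakLE cs (cs.simple i * u) (cs.simple i * v))) := by
  have hs : (cs.simple i)⁻¹ = cs.simple i := cs.inv_simple i
  have hls : cs.length (cs.simple i) = 1 := cs.length_simple i
  refine ⟨?_, ?_, ?_⟩
  · intro w hw
    unfold WeakLE at *
    rw [hs, hls, cs.simple_mul_simple_cancel_left] at *
    rcases cs.length_simple_mul w i with h | h <;> omega
  · intro w hw
    unfold WeakLE at *
    rw [hs, hls, cs.simple_mul_simple_cancel_left] at *
    rcases cs.length_simple_mul w i with h | h <;> omega
  · intro u v hu hv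
    unfold WeakLE at *
    rw [hs, hls] at hu hv
    have hcanc : (cs.simple i * u)⁻¹ * (cs.simple i * v) = u⁻¹ * v := by group
    rw [hcanc]
    rcases cs.length_simple_mul u i with h1 | h1
    · rcases cs.length_simple_mul v i with h2 | h2
      · omega
      · omega
    · omega
end

section
/- Let A be a symmetric or crystallographic generalized Cartan matrix, let J be an Ω-acyclic subset of S with linear extension (s_1, ..., s_k) of Ω|_J, and set t = s_1 s_2 ⋯ s_k ⋯ s_2 s_1. If r ∈ J satisfies r ≤ s_k in the order Ω|_J, then the coefficient of α_r in the expansion of β_t in simple roots is at least 1. -/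
variable {B : Type*}

/-- The reflection `s` acting on `V = B → ℝ`: `s(x) = x - (∑ s' A_{s s'} x_{s'}) α_s`. -/
noncomputable def sigmaRefl [Fintype B] [DecidableEq B] (A : B → B → ℝ) (s : B)
    (x : B → ℝ) : B → ℝ :=
  x - (∑ s', A s s' * x s') • (Pi.single s 1 : B → ℝ)

/-- For a list `(s₁, …, s_k)`, the positive root `β_t` of `t = s₁⋯s_k⋯s₁`, namely
`s₁ s₂ ⋯ s_{k-1} (α_{s_k})`. -/
noncomputable def betaWord [Fintype B] [DecidableEq B] (A : B → B → ℝ) :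
    List B → (B → ℝ)
  | [] => 0
  | [s] => (Pi.single s 1 : B → ℝ)
  | s :: rest => sigmaRefl A s (betaWord A rest)

lemma sigmaRefl_apply_ne [Fintype B] [DecidableEq B] (A : B → B → ℝ) (s : B)
    (x : B → ℝ) {r : B} (h : r ≠ s) : sigmaRefl A s x r = x r := by
  simp [sigmaRefl, Pi.single_apply, h]

lemma sigmaRefl_apply_self [Fintype B] [DecidableEq B] (A : B → B → ℝ) (s : B)
    (x : B → ℝ) : sigmaRefl A s x s = x s - ∑ s', A s s' * x s' := by
  simp [sigmaRefl, Pi.single_apply]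

lemma exists_rel_of_mem_tail {R : B → B → Prop} :
    ∀ {l : List B} {a : B}, l.Chain' R → a ∈ l.tail → ∃ b ∈ l, R b a := by
  intro l
  induction l with
  | nil => intro a _ h; simp at h
  | cons c t ih =>
    intro a hc ha
    simp only [List.tail_cons] at ha
    match t, ha with
    | c' :: t', ha =>
      simp only [List.Chain', List.isChain_cons_cons] at hc
      rcases List.mem_cons.mp ha with h | h
      · exact ⟨c, List.mem_cons_self, h ▸ hc.1⟩
      · obtain ⟨b, hb, hr⟩ := ih hc.2 h
        exact ⟨b, List.mem_cons_of_mem _ hb, hr⟩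

lemma A_le_neg_one (A : B → B → ℝ)
    (hoff : ∀ r s, r ≠ s → A r s ≤ 0)
    (hprod : ∀ r s, r ≠ s → A r s ≠ 0 → 1 ≤ A r s * A s r)
    (hsymcrys : (∀ r s, A r s = A s r) ∨ (∀ r s, ∃ n : ℤ, A r s = (n : ℝ)))
    {r s : B} (h1 : r ≠ s) (h2 : A r s ≠ 0) : A r s ≤ -1 := by
  have hle := hoff r s h1
  rcases hsymcrys with hsym | hcrys
  · have hp := hprod r s h1 h2
    have heq : A s r = A r s := hsym s r
    rw [heq] at hp
    nlinarith [hp, hle]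
  · obtain ⟨n, hn⟩ := hcrys r s
    have hn0 : n ≠ 0 := by rintro rfl; simp [hn] at h2
    have hnle : n ≤ 0 := by exact_mod_cast hn ▸ hle
    have : n ≤ -1 := by omega
    rw [hn]; exact_mod_cast this

lemma betaWord_main [Fintype B] [DecidableEq B]
    (A : B → B → ℝ) (Ω : B → B → Prop)
    (hoff : ∀ r s, r ≠ s → A r s ≤ 0)
    (hzero : ∀ r s, A r s = 0 ↔ A s r = 0)
    (hprod : ∀ r s, r ≠ s → A r s ≠ 0 → 1 ≤ A r s * A s r)
    (hsymcrys : (∀ r s, A r s = A s r) ∨ (∀ r s, ∃ n : ℤ, A r s = (n : ℝ)))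
    (hirrefl : ∀ r, ¬ Ω r r)
    (hedge : ∀ r s, r ≠ s → (A r s ≠ 0 ↔ (Ω r s ∨ Ω s r)))
    (l : List B) :
    l.Nodup →
    (∀ i j : Fin l.length, i < j → ¬ Ω (l.get i) (l.get j)) →
    (∀ s', s' ∉ l → betaWord A l s' = 0) ∧ (∀ s', 0 ≤ betaWord A l s') ∧
    (∀ r, (∃ p : List B, p ≠ [] ∧ p.Chain' (fun a b => Ω b a) ∧ p.head? = some r ∧
      p.getLast? = l.getLast? ∧ ∀ x ∈ p, x ∈ l) → 1 ≤ betaWord A l r) := by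
  induction l with
  | nil =>
    intro _ _
    refine ⟨fun s' _ => rfl, fun s' => le_refl _, fun r ⟨p, hpne, _, _, _, hsub⟩ => ?_⟩
    exact absurd (hsub (p.head hpne) (List.head_mem hpne)) List.not_mem_nil
  | cons s rest ih =>
    intro hnd hlin
    have hsr : s ∉ rest := (List.nodup_cons.mp hnd).1
    have hnd' : rest.Nodup := (List.nodup_cons.mp hnd).2
    -- the head has no out-edges into the list
    have hhead : ∀ x ∈ s :: rest, ¬ Ω s x := by
      intro x hx
      obtain ⟨i, hi⟩ := List.mem_iff_get.mp hx
      rcases Nat.eq_zero_or_pos i.1 with h0 | hpos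
      · have hxs : x = s := by
          have : i = ⟨0, by simp⟩ := Fin.ext h0
          rw [this] at hi; exact hi.symm
        rw [hxs]; exact hirrefl s
      · have hl := hlin ⟨0, by simp⟩ i hpos
        rw [hi] at hl
        exact hl
    match rest with
    | [] =>
      refine ⟨fun s' hs' => ?_, fun s' => ?_, fun r ⟨p, hpne, hch, hhd, hlast, hsub⟩ => ?_⟩
      · have : s' ≠ s := by simp at hs'; exact hs'
        simp [betaWord, Pi.single_apply, this]
      · by_cases h : s' = s <;> simp [betaWord, Pi.single_apply, h]
      · obtain ⟨r₀, q, rfl⟩ := List.exists_cons_of_ne_nil hpne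
        have hr0 : r₀ = r := by simpa using hhd
        subst hr0
        have hrs : r₀ = s := by
          have := hsub r₀ (List.mem_cons_self)
          simpa using this
        rw [hrs]; simp [betaWord, Pi.single_apply]
    | a :: t =>
      have hlin' : ∀ i j : Fin (a :: t).length, i < j → ¬ Ω ((a :: t).get i) ((a :: t).get j) := by
        intro i j hij
        have := hlin i.succ j.succ (by simpa using hij)
        simpa using this
      obtain ⟨ih0, ih1, ih2⟩ := ih hnd' hlin'
      set w := betaWord A (a :: t) with hw
      have hws : w s = 0 := ih0 s hsr
      have hbw : betaWord A (s :: a :: t) = sigmaRefl A s w := rfl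
      have hsupp : ∀ s', s' ∉ s :: a :: t → betaWord A (s :: a :: t) s' = 0 := by
        intro s' hs'
        have hne : s' ≠ s := fun h => hs' (h ▸ List.mem_cons_self)
        rw [hbw, sigmaRefl_apply_ne A s w hne]
        exact ih0 s' (fun h => hs' (List.mem_cons_of_mem _ h))
      -- each term of the sum is ≤ 0
      have hterm : ∀ s', A s s' * w s' ≤ 0 := by
        intro s'
        by_cases h : s' = s
        · rw [h, hws]; simp
        · exact mul_nonpos_of_nonpos_of_nonneg (hoff s s' (Ne.symm h)) (ih1 s')
      have hself : betaWord A (s :: a :: t) s = -∑ s', A s s' * w s' := by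
        rw [hbw, sigmaRefl_apply_self, hws]; ring
      have hnonneg : ∀ s', 0 ≤ betaWord A (s :: a :: t) s' := by
        intro s'
        by_cases h : s' = s
        · rw [h, hself]
          simp only [neg_nonneg]
          exact Finset.sum_nonpos (fun i _ => hterm i)
        · rw [hbw, sigmaRefl_apply_ne A s w h]; exact ih1 s'
      refine ⟨hsupp, hnonneg, fun r ⟨p, hpne, hch, hhd, hlast, hsub⟩ => ?_⟩
      -- s is not in the tail of p
      have hs_tail : s ∉ p.tail := by
        intro hmem
        obtain ⟨b, hb, hΩ⟩ := exists_rel_of_mem_tail hch hmem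
        exact hhead b (hsub b hb) hΩ
      have hlast' : p.getLast? = (a :: t).getLast? := by
        rw [hlast]; exact List.getLast?_cons_cons
      obtain ⟨r₀, q, rfl⟩ := List.exists_cons_of_ne_nil hpne
      have hr0 : r₀ = r := by simpa using hhd
      subst hr0
      simp only [List.tail_cons] at hs_tail
      by_cases hrs : r₀ = s
      · subst hrs
        -- p = s :: q, and q ≠ [] since the last element of p lies in a :: t
        rcases q with _ | ⟨m, q'⟩
        · exfalso
          have h1 : (a :: t).getLast? = some r₀ := by
            rw [← hlast']; simp
          have : r₀ ∈ (a :: t) := List.mem_of_mem_getLast? (by rw [h1]; rfl)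
          exact hsr this
        · simp only [List.Chain', List.isChain_cons_cons] at hch
          have hΩms : Ω m r₀ := hch.1
          have hms : m ≠ r₀ := fun h => hs_tail (h ▸ List.mem_cons_self)
          -- reachability of m within a :: t
          have hmem_rest : ∀ x ∈ m :: q', x ∈ a :: t := by
            intro x hx
            have hxl := hsub x (List.mem_cons_of_mem _ hx)
            have hxs : x ≠ r₀ := fun h => hs_tail (h ▸ hx)
            rcases List.mem_cons.mp hxl with h | h
            · exact absurd h hxs
            · exact h
          have h1m : 1 ≤ w m := ih2 m ⟨m :: q', List.cons_ne_nil _ _, hch.2, rfl,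
            by rw [← hlast']; exact List.getLast?_cons_cons.symm, hmem_rest⟩
          -- A r₀ m ≤ -1
          have hAms : A m r₀ ≠ 0 := (hedge m r₀ hms).mpr (Or.inl hΩms)
          have hAsm : A r₀ m ≠ 0 := fun h => hAms ((hzero r₀ m).mp h)
          have hA1 : A r₀ m ≤ -1 := A_le_neg_one A hoff hprod hsymcrys (Ne.symm hms) hAsm
          -- bound the sum by the single term at m
          have key : -(A r₀ m * w m) ≤ ∑ s', -(A r₀ s' * w s') :=
            Finset.single_le_sum (f := fun s' => -(A r₀ s' * w s'))
              (fun i _ => neg_nonneg.mpr (hterm i)) (Finset.mem_univ m)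
          rw [Finset.sum_neg_distrib] at key
          rw [hself]
          nlinarith [h1m, hA1, key, ih1 m]
      · -- r₀ ≠ s : the whole path lies in a :: t
        have hsub' : ∀ x ∈ r₀ :: q, x ∈ a :: t := by
          intro x hx
          have hxl := hsub x hx
          have hxs : x ≠ s := by
            rintro rfl
            rcases List.mem_cons.mp hx with h | h
            · exact hrs h.symm
            · exact hs_tail h
          rcases List.mem_cons.mp hxl with h | h
          · exact absurd h hxs
          · exact h
        have h1r : 1 ≤ w r₀ := ih2 r₀ ⟨r₀ :: q, List.cons_ne_nil _ _, hch, rfl, hlast', hsub'⟩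
        rw [hbw, sigmaRefl_apply_ne A s w hrs]
        exact h1r

/-- If `A` is symmetric or crystallographic, `(s₁, …, s_k)` is a linear extension of an
Ω-acyclic set `J`, `t = s₁⋯s_k⋯s₁`, and `r ≤_J s_k` (i.e. there is a directed path
`r ← ⋯ ← s_k` within `J`, possibly trivial), then the coefficient of `α_r` in `β_t`
is at least `1`. -/
theorem one_le_coeff_of_le [Fintype B] [DecidableEq B]
    (A : B → B → ℝ) (Ω : B → B → Prop)
    (hdiag : ∀ s, A s s = 2)
    (hoff : ∀ r s, r ≠ s → A r s ≤ 0)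
    (hzero : ∀ r s, A r s = 0 ↔ A s r = 0)
    (hprod : ∀ r s, r ≠ s → A r s ≠ 0 → 1 ≤ A r s * A s r)
    (hsymcrys : (∀ r s, A r s = A s r) ∨ (∀ r s, ∃ n : ℤ, A r s = (n : ℝ)))
    (hirrefl : ∀ r, ¬ Ω r r)
    (hasym : ∀ r s, ¬ (Ω r s ∧ Ω s r))
    (hedge : ∀ r s, r ≠ s → (A r s ≠ 0 ↔ (Ω r s ∨ Ω s r)))
    (l : List B) (hne : l ≠ []) (hnodup : l.Nodup)
    (hlin : ∀ i j : Fin l.length, i < j → ¬ Ω (l.get i) (l.get j))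
    (r : B) (hr : r ∈ l)
    (hle : ∃ p : List B, p ≠ [] ∧ p.Chain' (fun a b => Ω b a) ∧
      p.head? = some r ∧ p.getLast? = some (l.getLast hne) ∧ ∀ x ∈ p, x ∈ l) :
    1 ≤ betaWord A l r := by
  obtain ⟨_, _, hmain⟩ := betaWord_main A Ω hoff hzero hprod hsymcrys hirrefl hedge l hnodup hlin
  obtain ⟨p, h1, h2, h3, h4, h5⟩ := hle
  exact hmain r ⟨p, h1, h2, h3, by rw [h4, List.getLast?_eq_getLast hne], h5⟩
end
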